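/- arXiv:2401.10088 — 3 statements merged into one kernel-verified Lean document; each statement's English description precedes it below -/
import Mathlib

section
/- Let p ≥ 2 be an integer, let ω_1, …, ω_p be pairwise distinct positive real numbers, and define β_j := (1/ω_j)^{p-1} / ∏_{l≠j} (1/ω_j − 1/ω_l) and T_p(z) := ∑_{j=1}^p β_j (1 − ω_j z)^{-1} for complex z with ω_j z ≠ 1 for all j. Then T_p(z) − 1 = O(z^p) as z → 0; precisely, there exist constants C > 0 and δ > 0 such that |T_p(z) − 1| ≤ C |z|^p for all complex z with |z| < δ. -/
open Finset

open Polynomial in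
/-- Partial fraction identity: with distinct `x j` and `z ≠ x j`,
`∑ j, x j ^ p / ((x j - z) * ∏_{l≠j} (x j - x l)) = 1 - z^p / ∏ j (z - x j)`. -/
lemma tase_key (p : ℕ) (x : Fin p → ℂ) (hx : Function.Injective x)
    (z : ℂ) (hz : ∀ j, z ≠ x j) :
    ∑ j, (x j) ^ p / ((x j - z) * ∏ l ∈ Finset.univ.erase j, (x j - x l)) =
      1 - z ^ p / ∏ j, (z - x j) := by
  classical
  set D : ℂ := ∏ j, (z - x j) with hD
  have hDne : D ≠ 0 := Finset.prod_ne_zero_iff.2 fun j _ => sub_ne_zero.2 (hz j)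
  set g : ℂ[X] := ∏ j, (X - C (x j)) with hg
  have hgm : g.Monic := monic_prod_of_monic _ _ fun j _ => monic_X_sub_C _
  have hgd : g.degree = (p : ℕ) := by
    rw [hg, degree_prod]
    simp [degree_X_sub_C]
  have hdeg : ((X : ℂ[X]) ^ p - g).degree < ((Finset.univ : Finset (Fin p)).card : ℕ) := by
    have h1 : ((X : ℂ[X]) ^ p).degree = (p : ℕ) := degree_X_pow p
    have := degree_sub_lt (h1.trans hgd.symm) (pow_ne_zero p X_ne_zero)
      (by rw [leadingCoeff_X_pow]; exact hgm.symm)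
    simpa [h1, Finset.card_univ] using this
  have hinj : Set.InjOn x (Finset.univ : Finset (Fin p)) := hx.injOn
  have hinterp := Lagrange.eq_interpolate (f := (X : ℂ[X]) ^ p - g) hinj hdeg
  have hevalnode : ∀ j : Fin p, eval (x j) ((X : ℂ[X]) ^ p - g) = x j ^ p := by
    intro j
    have : eval (x j) g = 0 := by
      rw [hg, eval_prod]
      exact Finset.prod_eq_zero (Finset.mem_univ j) (by simp)
    simp [this]
  have heval : z ^ p - D =
      ∑ j, x j ^ p * ∏ m ∈ Finset.univ.erase j, ((x j - x m)⁻¹ * (z - x m)) := by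
    have h2 := congrArg (eval z) hinterp
    rw [Lagrange.interpolate_apply, eval_finset_sum] at h2
    have hDg : eval z g = D := by rw [hg, eval_prod]; simp [hD]
    simp only [eval_sub, eval_pow, eval_X, hDg, eval_mul, eval_C, hevalnode] at h2
    rw [h2]
    refine Finset.sum_congr rfl fun j _ => ?_
    congr 1
    rw [Lagrange.basis, eval_prod]
    refine Finset.prod_congr rfl fun m _ => ?_
    simp [Lagrange.basisDivisor]
  have hterm : ∀ j : Fin p,
      x j ^ p / ((x j - z) * ∏ l ∈ Finset.univ.erase j, (x j - x l)) =
        (x j ^ p * ∏ m ∈ Finset.univ.erase j, ((x j - x m)⁻¹ * (z - x m))) / (-D) := by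
    intro j
    have hP : (∏ l ∈ Finset.univ.erase j, (x j - x l)) ≠ 0 :=
      Finset.prod_ne_zero_iff.2 fun l hl => sub_ne_zero.2 fun h =>
        (Finset.mem_erase.1 hl).1 (hx h).symm
    have hQ : (∏ m ∈ Finset.univ.erase j, (z - x m)) ≠ 0 :=
      Finset.prod_ne_zero_iff.2 fun m _ => sub_ne_zero.2 (hz m)
    have hDj : D = (z - x j) * ∏ m ∈ Finset.univ.erase j, (z - x m) :=
      (Finset.mul_prod_erase _ _ (Finset.mem_univ j)).symm
    have hzj : z - x j ≠ 0 := sub_ne_zero.2 (hz j)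
    rw [Finset.prod_mul_distrib, Finset.prod_inv_distrib, hDj]
    have hneg : -((z - x j) * ∏ m ∈ Finset.univ.erase j, (z - x m)) =
        (x j - z) * ∏ m ∈ Finset.univ.erase j, (z - x m) := by ring
    rw [hneg, ← mul_assoc, mul_div_mul_right _ _ hQ]
    rw [div_mul_eq_div_div_swap, div_div, div_eq_mul_inv (x j ^ p), mul_inv,
      div_eq_mul_inv]
    ring
  calc ∑ j, (x j) ^ p / ((x j - z) * ∏ l ∈ Finset.univ.erase j, (x j - x l))
      = (∑ j, x j ^ p * ∏ m ∈ Finset.univ.erase j, ((x j - x m)⁻¹ * (z - x m))) / (-D) := by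
        simp only [hterm]
        rw [← Finset.sum_div]
    _ = (z ^ p - D) / (-D) := by rw [← heval]
    _ = 1 - z ^ p / D := by rw [div_neg, sub_div, div_self hDne]; ring

/-- With `β_j` as in the TASE operator
`T_p(z) := ∑_j β_j (1 − ω_j z)⁻¹`, one has `T_p(z) − 1 = O(z^p)` as `z → 0`:
there exist `C > 0` and `δ > 0` with `|T_p(z) − 1| ≤ C |z|^p` for `|z| < δ`. -/
theorem tase_operator_order (p : ℕ) (hp : 2 ≤ p)
    (ω : Fin p → ℝ) (hpos : ∀ j, 0 < ω j) (hinj : Function.Injective ω)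
    (β : Fin p → ℝ)
    (hβ : ∀ j, β j = (1 / ω j) ^ (p - 1) /
      ∏ l ∈ Finset.univ.erase j, (1 / ω j - 1 / ω l)) :
    ∃ C > (0 : ℝ), ∃ δ > (0 : ℝ), ∀ z : ℂ, ‖z‖ < δ →
      ‖(∑ j, (β j : ℂ) * (1 - (ω j : ℂ) * z)⁻¹) - 1‖ ≤
        C * ‖z‖ ^ p := by
  classical
  have hp0 : 0 < p := by omega
  have hne : (Finset.univ : Finset (Fin p)).Nonempty := ⟨⟨0, hp0⟩, Finset.mem_univ _⟩
  set x : Fin p → ℂ := fun j => ((ω j : ℂ))⁻¹ with hxdef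
  have hxne : ∀ j, x j ≠ 0 := fun j => by
    simp [hxdef, Complex.ofReal_ne_zero, (hpos j).ne']
  have hxinj : Function.Injective x := by
    intro a b h
    exact hinj (by exact_mod_cast inv_injective h)
  set δ : ℝ := (Finset.univ.inf' hne fun j => (ω j)⁻¹) / 2 with hδdef
  have hδpos : 0 < δ := by
    apply div_pos _ two_pos
    exact (Finset.lt_inf'_iff hne).2 fun j _ => inv_pos.2 (hpos j)
  have hδle : ∀ j, δ ≤ (ω j)⁻¹ / 2 := fun j => by
    rw [hδdef]
    gcongr
    exact Finset.inf'_le _ (Finset.mem_univ j)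
  set B : ℝ := ∏ j, (ω j)⁻¹ / 2 with hB
  have hBpos : 0 < B := Finset.prod_pos fun j _ => div_pos (inv_pos.2 (hpos j)) two_pos
  refine ⟨B⁻¹, inv_pos.2 hBpos, δ, hδpos, fun z hzδ => ?_⟩
  have habsx : ∀ j, ‖x j‖ = (ω j)⁻¹ := by
    intro j
    simp [hxdef, abs_of_pos (hpos j)]
  have hzx : ∀ j, ‖z‖ < ‖x j‖ := by
    intro j
    have := hδle j
    have h2 : (ω j)⁻¹ / 2 < (ω j)⁻¹ := by
      have := inv_pos.2 (hpos j); linarith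
    rw [habsx]
    linarith
  have hz : ∀ j, z ≠ x j := fun j h => absurd (h ▸ hzx j) (lt_irrefl _)
  -- rewrite each summand
  have hsum : (∑ j, (β j : ℂ) * (1 - (ω j : ℂ) * z)⁻¹) =
      ∑ j, (x j) ^ p / ((x j - z) * ∏ l ∈ Finset.univ.erase j, (x j - x l)) := by
    refine Finset.sum_congr rfl fun j _ => ?_
    have hωC : (ω j : ℂ) ≠ 0 := Complex.ofReal_ne_zero.2 (hpos j).ne'
    have hβC : (β j : ℂ) = (x j) ^ (p - 1) / ∏ l ∈ Finset.univ.erase j, (x j - x l) := by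
      rw [hβ j]
      push_cast
      simp [hxdef, one_div]
    have hP : (∏ l ∈ Finset.univ.erase j, (x j - x l)) ≠ 0 :=
      Finset.prod_ne_zero_iff.2 fun l hl => sub_ne_zero.2 fun h =>
        (Finset.mem_erase.1 hl).1 (hxinj h).symm
    have hxz : x j - z ≠ 0 := sub_ne_zero.2 fun h => hz j h.symm
    have h1ω : (1 : ℂ) - (ω j : ℂ) * z = (x j - z) / x j := by
      simp only [hxdef]
      field_simp
    rw [hβC, h1ω]
    have hpow : x j ^ (p - 1) * x j = x j ^ p := by
      rw [← pow_succ]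
      congr 1
      omega
    rw [inv_div, div_mul_div_comm, hpow, mul_comm (∏ l ∈ Finset.univ.erase j, (x j - x l))]
  rw [hsum, tase_key p x hxinj z hz]
  have habs : ‖(1 - z ^ p / ∏ j, (z - x j)) - 1‖ =
      ‖z‖ ^ p / ‖∏ j, (z - x j)‖ := by
    rw [sub_sub_cancel_left, norm_neg, norm_div, norm_pow]
  rw [habs]
  have hDge : B ≤ ‖∏ j, (z - x j)‖ := by
    rw [norm_prod]
    refine Finset.prod_le_prod (fun j _ => le_of_lt (div_pos (inv_pos.2 (hpos j)) two_pos))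
      fun j _ => ?_
    have h1 : ‖x j‖ ≤ ‖z - x j‖ + ‖z‖ := by
      calc ‖x j‖ = ‖(x j - z) + z‖ := by ring_nf
        _ ≤ ‖x j - z‖ + ‖z‖ := norm_add_le _ _
        _ = ‖z - x j‖ + ‖z‖ := by rw [norm_sub_rev]
    have h2 := hδle j
    have h3 := habsx j
    have := hzx j
    nlinarith [hzδ, h3 ▸ h1]
  calc ‖z‖ ^ p / ‖∏ j, (z - x j)‖ ≤ ‖z‖ ^ p / B := by
        apply div_le_div_of_nonneg_left (pow_nonneg (norm_nonneg z) p) hBpos hDge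
    _ = B⁻¹ * ‖z‖ ^ p := by rw [div_eq_mul_inv, mul_comm]
end

section
/- Let T̂_2(y) := y·(−(1 − 3y)^{-1} + 2(1 − (3/2)y)^{-1}) for y < 0. Then T̂_2 is strictly increasing on (−∞, 0) and satisfies −1 < T̂_2(y) < 0 for every y < 0. -/
/-- `T̂₂(y) := y·(−(1 − 3y)⁻¹ + 2(1 − (3/2)y)⁻¹)` is strictly increasing on
`(−∞, 0)` and satisfies `−1 < T̂₂(y) < 0` for every `y < 0`. -/
theorem That2_strictMono_and_bounds :
    StrictMonoOn (fun y : ℝ => y * (-(1 - 3 * y)⁻¹ + 2 * (1 - (3 / 2) * y)⁻¹)) (Set.Iio 0) ∧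
    ∀ y : ℝ, y < 0 →
      -1 < y * (-(1 - 3 * y)⁻¹ + 2 * (1 - (3 / 2) * y)⁻¹) ∧
      y * (-(1 - 3 * y)⁻¹ + 2 * (1 - (3 / 2) * y)⁻¹) < 0 := by
  constructor
  · intro x hx y hy hxy
    simp only [Set.mem_Iio] at hx hy
    have hax : (0:ℝ) < 1 - 3 * x := by linarith
    have hbx : (0:ℝ) < 1 - (3/2) * x := by linarith
    have hay : (0:ℝ) < 1 - 3 * y := by linarith
    have hby : (0:ℝ) < 1 - (3/2) * y := by linarith
    have Ax : (1 - 3 * x)⁻¹ * (1 - 3 * x) = 1 := inv_mul_cancel₀ hax.ne'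
    have Bx : (1 - (3/2) * x)⁻¹ * (1 - (3/2) * x) = 1 := inv_mul_cancel₀ hbx.ne'
    have Ay : (1 - 3 * y)⁻¹ * (1 - 3 * y) = 1 := inv_mul_cancel₀ hay.ne'
    have By : (1 - (3/2) * y)⁻¹ * (1 - (3/2) * y) = 1 := inv_mul_cancel₀ hby.ne'
    have hD : (0:ℝ) < (1 - 3 * x) * ((1 - (3/2) * x) * ((1 - 3 * y) * (1 - (3/2) * y))) := by
      positivity
    simp only
    rw [← sub_pos]
    have key : y * (-(1 - 3 * y)⁻¹ + 2 * (1 - (3 / 2) * y)⁻¹)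
        - x * (-(1 - 3 * x)⁻¹ + 2 * (1 - (3 / 2) * x)⁻¹)
        = ((y - x) * (1 - (9/2) * (x + y) + (63/4) * (x * y)))
          / ((1 - 3 * x) * ((1 - (3/2) * x) * ((1 - 3 * y) * (1 - (3/2) * y)))) := by
      rw [eq_div_iff hD.ne']
      linear_combination
        (-(y * ((1 - 3 * x) * ((1 - (3/2) * x) * (1 - (3/2) * y))))) * Ay
        + (2 * y * ((1 - 3 * x) * ((1 - (3/2) * x) * (1 - 3 * y)))) * By
        + (x * ((1 - (3/2) * x) * ((1 - 3 * y) * (1 - (3/2) * y)))) * Ax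
        + (-(2 * x * ((1 - 3 * x) * ((1 - 3 * y) * (1 - (3/2) * y))))) * Bx
    rw [key]
    apply div_pos _ hD
    have h1 : 0 < x * y := mul_pos_of_neg_of_neg hx hy
    nlinarith
  · intro y hy
    have hay : (0:ℝ) < 1 - 3 * y := by linarith
    have hby : (0:ℝ) < 1 - (3/2) * y := by linarith
    have Ay : (1 - 3 * y)⁻¹ * (1 - 3 * y) = 1 := inv_mul_cancel₀ hay.ne'
    have By : (1 - (3/2) * y)⁻¹ * (1 - (3/2) * y) = 1 := inv_mul_cancel₀ hby.ne'
    have hD : (0:ℝ) < (1 - 3 * y) * (1 - (3/2) * y) := by positivity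
    constructor
    · rw [← sub_pos]
      have key : y * (-(1 - 3 * y)⁻¹ + 2 * (1 - (3 / 2) * y)⁻¹) - (-1)
          = (1 - (7/2) * y) / ((1 - 3 * y) * (1 - (3/2) * y)) := by
        rw [eq_div_iff hD.ne']
        linear_combination (-(y * (1 - (3/2) * y))) * Ay + (2 * y * (1 - 3 * y)) * By
      rw [key]
      exact div_pos (by linarith) hD
    · have key : y * (-(1 - 3 * y)⁻¹ + 2 * (1 - (3 / 2) * y)⁻¹)
          = (y * (1 - (9/2) * y)) / ((1 - 3 * y) * (1 - (3/2) * y)) := by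
        rw [eq_div_iff hD.ne']
        linear_combination (-(y * (1 - (3/2) * y))) * Ay + (2 * y * (1 - 3 * y)) * By
      rw [key]
      exact div_neg_of_neg_of_pos (by nlinarith) hD
end

section
/- Fix p ∈ {2, 3, 4} and pairwise distinct positive parameters ω_1, …, ω_p with β_j := (1/ω_j)^{p-1} / ∏_{l≠j} (1/ω_j − 1/ω_l). Let A be a real symmetric negative definite d×d matrix and B a real d×d matrix, and for k > 0 let M(k) := ∑_{q=0}^p Z(k)^q/q! with Z(k) := k T_p(kA)(A + B), T_p(kA) := ∑_j β_j (I − ω_j k A)^{-1}. If the spectral radius of M(k) is at most 1 for every k > 0, then every eigenvalue μ of A^{-1}B satisfies |R_p(T̂_p^*(1+μ))| ≤ 1, where R_p(z) := ∑_{q=0}^p z^q/q! and T̂_p^* := −∑_{j=1}^p β_j/ω_j. -/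
open Finset

/-- The TASE coefficients `β_j := (1/ω_j)^(p-1) / ∏_{l≠j} (1/ω_j − 1/ω_l)`. -/
noncomputable def taseBeta (p : ℕ) (ω : Fin p → ℝ) (j : Fin p) : ℝ :=
  (1 / ω j) ^ (p - 1) / ∏ l ∈ Finset.univ.erase j, (1 / ω j - 1 / ω l)

/-- `T̂_p(y) := y ∑_j β_j (1 − ω_j y)⁻¹`. -/
noncomputable def taseThat (p : ℕ) (ω : Fin p → ℝ) (y : ℝ) : ℝ :=
  y * ∑ j, taseBeta p ω j * (1 - ω j * y)⁻¹

/-- The truncated exponential `R_p(z) := ∑_{q=0}^p z^q/q!`, the stability function of an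
explicit `p`-stage order-`p` Runge-Kutta method. -/
noncomputable def rkStabFun (p : ℕ) (z : ℂ) : ℂ :=
  ∑ q ∈ Finset.range (p + 1), z ^ q / (q.factorial : ℂ)

/-- The stability region `𝓡_p := {z ∈ ℂ : Re z ≤ 0, |R_p(z)| ≤ 1}`. -/
noncomputable def rkStabRegion (p : ℕ) : Set ℂ :=
  {z : ℂ | z.re ≤ 0 ∧ ‖rkStabFun p z‖ ≤ 1}

/-- The conditional stability diagram
`D_{y,p} := {μ ∈ ℂ : Re μ ≥ −1, |R_p(T̂_p(y)(1+μ))| ≤ 1}`. -/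
noncomputable def taseDiagram (p : ℕ) (ω : Fin p → ℝ) (y : ℝ) : Set ℂ :=
  {μ : ℂ | -1 ≤ μ.re ∧ ‖rkStabFun p ((taseThat p ω y : ℝ) * (1 + μ))‖ ≤ 1}

/-- The Table-1 parameters of the paper: `ω = (3, 3/2)` for `p = 2`,
`ω = (2.3147, 1.8796, 1.5822)` for `p = 3`, `ω = (3.9396, 2.4506, 2.2271, 2.0612)` for `p = 4`. -/
noncomputable def tableOmega (p : ℕ) (j : Fin p) : ℝ :=
  if p = 2 then (if (j : ℕ) = 0 then 3 else 3 / 2)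
  else if p = 3 then
    (if (j : ℕ) = 0 then 2.3147 else if (j : ℕ) = 1 then 1.8796 else 1.5822)
  else
    (if (j : ℕ) = 0 then 3.9396 else if (j : ℕ) = 1 then 2.4506
     else if (j : ℕ) = 2 then 2.2271 else 2.0612)

/-- `T̂_p^* := −∑_j β_j/ω_j`, the limit of `T̂_p(y)` as `y → −∞`. -/
noncomputable def taseThatStar (p : ℕ) (ω : Fin p → ℝ) : ℝ :=
  -∑ j, taseBeta p ω j / ω j

/-- The unconditional stability diagram
`D_{∞,p} := {μ ∈ ℂ : Re μ ≥ −1, |R_p(T̂_p^*(1+μ))| ≤ 1}`. -/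
noncomputable def taseDiagramInf (p : ℕ) (ω : Fin p → ℝ) : Set ℂ :=
  {μ : ℂ | -1 ≤ μ.re ∧ ‖rkStabFun p ((taseThatStar p ω : ℝ) * (1 + μ))‖ ≤ 1}

/-- The TASE operator applied to `kA`: `T_p(kA) := ∑_j β_j (I − ω_j k A)⁻¹`. -/
noncomputable def taseMat (p d : ℕ) (ω : Fin p → ℝ) (k : ℝ)
    (A : Matrix (Fin d) (Fin d) ℂ) : Matrix (Fin d) (Fin d) ℂ :=
  ∑ j, (taseBeta p ω j : ℂ) • (1 - ((ω j * k : ℝ) : ℂ) • A)⁻¹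

/-- `Z := k T_p(kA)(A + B)`. -/
noncomputable def taseZ (p d : ℕ) (ω : Fin p → ℝ) (k : ℝ)
    (A B : Matrix (Fin d) (Fin d) ℂ) : Matrix (Fin d) (Fin d) ℂ :=
  (k : ℂ) • (taseMat p d ω k A * (A + B))

/-- The TASE-RK stability matrix `M := ∑_{q=0}^p Z^q/q!`. -/
noncomputable def taseM (p d : ℕ) (ω : Fin p → ℝ) (k : ℝ)
    (A B : Matrix (Fin d) (Fin d) ℂ) : Matrix (Fin d) (Fin d) ℂ :=
  ∑ q ∈ Finset.range (p + 1), ((q.factorial : ℂ))⁻¹ • (taseZ p d ω k A B) ^ q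


lemma my_charpoly_eval {d : ℕ} (M : Matrix (Fin d) (Fin d) ℂ) (z : ℂ) :
    M.charpoly.eval z = (z • (1 : Matrix (Fin d) (Fin d) ℂ) - M).det := by
  rw [Matrix.charpoly, ← Polynomial.coe_evalRingHom, RingHom.map_det]
  congr 1
  ext i j
  by_cases h : i = j
  · subst h
    simp [Matrix.charmatrix_apply_eq, Matrix.map_apply, Matrix.sub_apply,
      Matrix.smul_apply, Matrix.one_apply]
  · simp [Matrix.charmatrix_apply_ne _ _ _ h, Matrix.map_apply, Matrix.sub_apply,
      Matrix.smul_apply, Matrix.one_apply, h]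

lemma my_mem_spectrum_iff_det {d : ℕ} (M : Matrix (Fin d) (Fin d) ℂ) (z : ℂ) :
    z ∈ spectrum ℂ M ↔ (z • (1 : Matrix (Fin d) (Fin d) ℂ) - M).det = 0 := by
  rw [spectrum.mem_iff, Matrix.isUnit_iff_isUnit_det, isUnit_iff_ne_zero, not_not,
    Algebra.algebraMap_eq_smul_one]

lemma my_abs_prod_ge (s : Multiset ℂ) (c : ℝ) (hc : 0 ≤ c) (h : ∀ x ∈ s, c ≤ ‖x‖) :
    c ^ (Multiset.card s) ≤ ‖s.prod‖ := by
  induction s using Multiset.induction with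
  | empty => simp
  | cons a s ih =>
      rw [Multiset.prod_cons, Multiset.card_cons, pow_succ', norm_mul]
      exact mul_le_mul (h a (Multiset.mem_cons_self a s))
        (ih fun x hx => h x (Multiset.mem_cons_of_mem hx)) (pow_nonneg hc _)
        (norm_nonneg _)

lemma my_det_lower_bound {d : ℕ} (M : Matrix (Fin d) (Fin d) ℂ) (z : ℂ)
    (hsr : spectralRadius ℂ M ≤ 1) (hz : 1 < ‖z‖) :
    (‖z‖ - 1) ^ d ≤ ‖(z • (1 : Matrix (Fin d) (Fin d) ℂ) - M).det‖ := by
  have hsplit : M.charpoly.Splits := IsAlgClosed.splits _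
  have hmonic := M.charpoly_monic
  have hcard : Multiset.card M.charpoly.roots = d := by
    rw [(Polynomial.splits_iff_card_roots).mp hsplit, Matrix.charpoly_natDegree_eq_dim,
      Fintype.card_fin]
  have heval : M.charpoly.eval z = ((M.charpoly.roots).map (fun r => z - r)).prod := by
    conv_lhs => rw [hsplit.eq_prod_roots_of_monic hmonic]
    rw [Polynomial.eval_multiset_prod, Multiset.map_map]
    simp
  have hroot_spec : ∀ r ∈ M.charpoly.roots, ‖r‖ ≤ 1 := by
    intro r hr
    have hspec : r ∈ spectrum ℂ M := by
      rw [my_mem_spectrum_iff_det, ← my_charpoly_eval]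
      exact (Polynomial.isRoot_of_mem_roots hr)
    have : (‖r‖₊ : ENNReal) ≤ spectralRadius ℂ M := le_iSup₂ (f := fun k (_ : k ∈ spectrum ℂ M) => (‖k‖₊ : ENNReal)) r hspec
    have h1 : (‖r‖₊ : ENNReal) ≤ 1 := this.trans hsr
    rw [← ENNReal.coe_one, ENNReal.coe_le_coe] at h1
    exact_mod_cast h1
  calc (‖z‖ - 1) ^ d
      = (‖z‖ - 1) ^ (Multiset.card ((M.charpoly.roots).map (fun r => z - r))) := by
        rw [Multiset.card_map, hcard]
    _ ≤ ‖((M.charpoly.roots).map (fun r => z - r)).prod‖ := by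
        apply my_abs_prod_ge _ _ (by linarith)
        intro x hx
        obtain ⟨r, hr, rfl⟩ := Multiset.mem_map.mp hx
        have h1 : ‖r‖ ≤ 1 := hroot_spec r hr
        have h2 : ‖z‖ - ‖r‖ ≤ ‖z - r‖ := by
          exact norm_sub_norm_le z r
        linarith
    _ = ‖(z • (1 : Matrix (Fin d) (Fin d) ℂ) - M).det‖ := by
        rw [← heval, my_charpoly_eval]


lemma my_posDef_smul {n : ℕ} {c : ℝ} {M : Matrix (Fin n) (Fin n) ℝ} (hM : M.PosDef)
    (hc : 0 < c) : (c • M).PosDef := by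
  refine ⟨?_, fun x hx => ?_⟩
  · unfold Matrix.IsHermitian
    rw [Matrix.conjTranspose_smul]
    rw [hM.1]
    norm_num
  · exact (hM.smul hc).2 hx

lemma my_posSemidef_smul {n : ℕ} {c : ℝ} {M : Matrix (Fin n) (Fin n) ℝ} (hM : M.PosSemidef)
    (hc : 0 ≤ c) : (c • M).PosSemidef := by
  refine ⟨?_, fun x => ?_⟩
  · unfold Matrix.IsHermitian
    rw [Matrix.conjTranspose_smul]
    rw [hM.1]
    norm_num
  · exact (hM.smul hc).2 x

/-- det of `s•1 - ω•A` over ℂ is nonzero for `s ≥ 0`, `ω > 0`, `-A` posdef. -/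
lemma my_det_ne_zero {n : ℕ} {A : Matrix (Fin n) (Fin n) ℝ} (hAneg : (-A).PosDef)
    {w s : ℝ} (hw : 0 < w) (hs : 0 ≤ s) :
    (((s : ℂ)) • (1 : Matrix (Fin n) (Fin n) ℂ) - (w : ℂ) • A.map Complex.ofReal).det ≠ 0 := by
  have hreal : (s • (1 : Matrix (Fin n) (Fin n) ℝ) - w • A).PosDef := by
    have he : s • (1 : Matrix (Fin n) (Fin n) ℝ) - w • A
        = s • (1 : Matrix (Fin n) (Fin n) ℝ) + w • (-A) := by
      rw [smul_neg, sub_eq_add_neg]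
    rw [he]
    exact Matrix.PosDef.posSemidef_add (my_posSemidef_smul Matrix.PosSemidef.one hs)
      (my_posDef_smul hAneg hw)
  have hmap : ((s : ℂ)) • (1 : Matrix (Fin n) (Fin n) ℂ) - (w : ℂ) • A.map Complex.ofReal
      = (s • (1 : Matrix (Fin n) (Fin n) ℝ) - w • A).map Complex.ofReal := by
    ext i j
    by_cases h : i = j <;>
      simp [Matrix.map_apply, Matrix.sub_apply, Matrix.smul_apply, Matrix.one_apply, h]
  have hd := RingHom.map_det Complex.ofRealHom (s • (1 : Matrix (Fin n) (Fin n) ℝ) - w • A)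
  rw [RingHom.mapMatrix_apply] at hd
  have hco : ⇑Complex.ofRealHom = Complex.ofReal := funext Complex.ofRealHom_eq_coe
  rw [hco] at hd
  rw [hmap, ← hd]
  simpa using (ne_of_gt hreal.det_pos)


/-- Necessary condition for unconditional stability: if `ρ(M(k)) ≤ 1` for every
step `k > 0`, then every eigenvalue `μ` of `A⁻¹B` satisfies `|R_p(T̂_p^*(1+μ))| ≤ 1`. -/
theorem genEig_cond_of_unconditionallyStable (p : ℕ) (hp : p = 2 ∨ p = 3 ∨ p = 4)
    (ω : Fin p → ℝ) (hpos : ∀ j, 0 < ω j) (hinj : Function.Injective ω)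
    (d : ℕ) (A B : Matrix (Fin d) (Fin d) ℝ)
    (hA : A.IsSymm) (hAneg : (-A).PosDef)
    (hstab : ∀ k : ℝ, 0 < k →
      spectralRadius ℂ (taseM p d ω k (A.map Complex.ofReal) (B.map Complex.ofReal)) ≤ 1) :
    ∀ μ ∈ spectrum ℂ ((A.map Complex.ofReal)⁻¹ * B.map Complex.ofReal),
      ‖rkStabFun p (((taseThatStar p ω : ℝ) : ℂ) * (1 + μ))‖ ≤ 1 := by
  intro μ hμ
  by_contra hgt
  push_neg at hgt
  set Ac := A.map Complex.ofReal with hAcdef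
  set Bc := B.map Complex.ofReal with hBcdef
  set t : ℂ := ((taseThatStar p ω : ℝ) : ℂ) with htdef
  set z : ℂ := rkStabFun p (t * (1 + μ)) with hzdef
  -- determinant of Ac is nonzero
  have hdetA : Ac.det ≠ 0 := by
    have h := my_det_ne_zero (A := A) hAneg one_pos le_rfl
    have he : (((0:ℝ) : ℂ)) • (1 : Matrix (Fin d) (Fin d) ℂ) - ((1:ℝ) : ℂ) • Ac = -Ac := by
      push_cast
      simp
    rw [he, Matrix.det_neg] at h
    intro hc
    rw [hc, mul_zero] at h
    exact h rfl
  have hunitA : IsUnit Ac.det := isUnit_iff_ne_zero.mpr hdetA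
  -- the resolvent-type functions
  set N : Fin p → ℝ → Matrix (Fin d) (Fin d) ℂ :=
    fun j s => (((s : ℂ)) • (1 : Matrix (Fin d) (Fin d) ℂ) - ((ω j : ℝ) : ℂ) • Ac)⁻¹
    with hNdef
  set G : ℝ → Matrix (Fin d) (Fin d) ℂ := fun s =>
    ∑ q ∈ Finset.range (p + 1), ((q.factorial : ℂ))⁻¹ •
      (((∑ j, ((taseBeta p ω j : ℝ) : ℂ) • N j s) * (Ac + Bc)) ^ q) with hGdef
  -- Step A : for k > 0, taseM = G k⁻¹
  have hGM : ∀ k : ℝ, 0 < k → taseM p d ω k Ac Bc = G k⁻¹ := by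
    intro k hk
    have hkC : (k : ℂ) ≠ 0 := by exact_mod_cast ne_of_gt hk
    have hkey : ∀ j : Fin p,
        (k : ℂ) • ((1 : Matrix (Fin d) (Fin d) ℂ) - ((ω j * k : ℝ) : ℂ) • Ac)⁻¹ = N j k⁻¹ := by
      intro j
      have hsd : ((1 : Matrix (Fin d) (Fin d) ℂ) - ((ω j * k : ℝ) : ℂ) • Ac)
          = (k : ℂ) • ((((k⁻¹ : ℝ) : ℂ)) • (1 : Matrix (Fin d) (Fin d) ℂ)
              - ((ω j : ℝ) : ℂ) • Ac) := by
        rw [smul_sub, smul_smul, smul_smul]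
        congr 1
        · rw [show (k : ℂ) * ((k⁻¹ : ℝ) : ℂ) = 1 by
            push_cast
            field_simp]
          rw [one_smul]
        · congr 1
          push_cast
          ring
      have hDdet : IsUnit ((((k⁻¹ : ℝ) : ℂ)) • (1 : Matrix (Fin d) (Fin d) ℂ)
          - ((ω j : ℝ) : ℂ) • Ac).det :=
        isUnit_iff_ne_zero.mpr (my_det_ne_zero hAneg (hpos j) (le_of_lt (inv_pos.mpr hk)))
      set u : ℂˣ := Units.mk0 (k : ℂ) hkC with hu
      have husmul : ((k : ℂ)) • ((((k⁻¹ : ℝ) : ℂ)) • (1 : Matrix (Fin d) (Fin d) ℂ)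
          - ((ω j : ℝ) : ℂ) • Ac) = u • ((((k⁻¹ : ℝ) : ℂ)) • (1 : Matrix (Fin d) (Fin d) ℂ)
          - ((ω j : ℝ) : ℂ) • Ac) := rfl
      rw [hsd, husmul, Matrix.inv_smul' _ u hDdet]
      rw [Units.smul_def, smul_smul]
      have huv : ((u⁻¹ : ℂˣ) : ℂ) = (k : ℂ)⁻¹ := by
        rw [hu]
        simp
      rw [huv, mul_inv_cancel₀ hkC, one_smul, hNdef]
    rw [taseM, taseZ, taseMat, hGdef]
    apply Finset.sum_congr rfl
    intro q _
    congr 1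
    rw [← smul_mul_assoc]
    congr 1
    rw [Finset.smul_sum]
    congr 1
    apply Finset.sum_congr rfl
    intro j _
    rw [smul_comm, hkey j]
  -- Step B : continuity and the limit
  have hNcont : ∀ j : Fin p, ContinuousAt (N j) 0 := by
    intro j
    have hDc : Continuous (fun s : ℝ =>
        ((s : ℂ)) • (1 : Matrix (Fin d) (Fin d) ℂ) - ((ω j : ℝ) : ℂ) • Ac) :=
      (Complex.continuous_ofReal.smul continuous_const).sub continuous_const
    have hNval : N j = fun s : ℝ =>
        (((s : ℂ)) • (1 : Matrix (Fin d) (Fin d) ℂ) - ((ω j : ℝ) : ℂ) • Ac).det⁻¹ •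
        (((s : ℂ)) • (1 : Matrix (Fin d) (Fin d) ℂ) - ((ω j : ℝ) : ℂ) • Ac).adjugate := by
      funext s
      simp only [hNdef]
      rw [Matrix.inv_def, Ring.inverse_eq_inv']
    rw [hNval]
    have hd0 : (((((0:ℝ)) : ℂ)) • (1 : Matrix (Fin d) (Fin d) ℂ)
        - ((ω j : ℝ) : ℂ) • Ac).det ≠ 0 := my_det_ne_zero hAneg (hpos j) le_rfl
    exact ((hDc.matrix_det.continuousAt).inv₀ hd0).smul hDc.matrix_adjugate.continuousAt
  have hGcont : ContinuousAt G 0 := by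
    rw [hGdef]
    apply tendsto_finset_sum
    intro q _
    have hF : ContinuousAt (fun s : ℝ =>
        (∑ j, ((taseBeta p ω j : ℝ) : ℂ) • N j s) * (Ac + Bc)) 0 := by
      apply ContinuousAt.mul _ continuousAt_const
      apply tendsto_finset_sum
      intro j _
      exact (hNcont j).tendsto.const_smul _
    exact (hF.tendsto.pow q).const_smul _
  have htend : Filter.Tendsto (fun k : ℝ => G k⁻¹) Filter.atTop (nhds (G 0)) :=
    (hGcont.tendsto).comp tendsto_inv_atTop_zero
  -- Step C : identify G 0
  have hN0 : ∀ j : Fin p, N j 0 = (-((ω j : ℝ) : ℂ))⁻¹ • Ac⁻¹ := by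
    intro j
    have hwne : (-((ω j : ℝ) : ℂ)) ≠ 0 := by
      simp only [ne_eq, neg_eq_zero, Complex.ofReal_eq_zero]
      exact ne_of_gt (hpos j)
    set u : ℂˣ := Units.mk0 (-((ω j : ℝ) : ℂ)) hwne with hu
    have he : (((((0:ℝ)) : ℂ)) • (1 : Matrix (Fin d) (Fin d) ℂ) - ((ω j : ℝ) : ℂ) • Ac)
        = u • Ac := by
      rw [hu]
      show ((((0:ℝ)) : ℂ)) • (1 : Matrix (Fin d) (Fin d) ℂ) - ((ω j : ℝ) : ℂ) • Ac
        = (-((ω j : ℝ) : ℂ)) • Ac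
      push_cast
      simp [neg_smul]
    rw [hNdef]
    show (((((0:ℝ)) : ℂ)) • (1 : Matrix (Fin d) (Fin d) ℂ) - ((ω j : ℝ) : ℂ) • Ac)⁻¹
      = (-((ω j : ℝ) : ℂ))⁻¹ • Ac⁻¹
    rw [he, Matrix.inv_smul' _ u hunitA, Units.smul_def, hu]
    simp
  have hsum0 : (∑ j, ((taseBeta p ω j : ℝ) : ℂ) • N j 0) = t • Ac⁻¹ := by
    have : ∀ j : Fin p, ((taseBeta p ω j : ℝ) : ℂ) • N j 0
        = ((-(taseBeta p ω j / ω j) : ℝ) : ℂ) • Ac⁻¹ := by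
      intro j
      rw [hN0 j, smul_smul, inv_neg]
      congr 1
      push_cast
      ring
    rw [Finset.sum_congr rfl (fun j _ => this j), ← Finset.sum_smul]
    congr 1
    rw [htdef, taseThatStar]
    push_cast
    rw [← Finset.sum_neg_distrib]
  have hG0 : G 0 = ∑ q ∈ Finset.range (p + 1), ((q.factorial : ℂ))⁻¹ •
      ((t • ((1 : Matrix (Fin d) (Fin d) ℂ) + Ac⁻¹ * Bc)) ^ q) := by
    rw [hGdef]
    apply Finset.sum_congr rfl
    intro q _
    congr 2
    rw [hsum0, smul_mul_assoc, mul_add, Matrix.nonsing_inv_mul Ac hunitA]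
  -- Step D : z is in the spectrum of G 0
  have hspec : z ∈ spectrum ℂ (G 0) := by
    set P : Polynomial ℂ := ∑ q ∈ Finset.range (p + 1),
      Polynomial.C ((q.factorial : ℂ))⁻¹ * (Polynomial.C t * (1 + Polynomial.X)) ^ q with hP
    have h1 : Polynomial.eval μ P = z := by
      rw [hzdef, hP, rkStabFun, Polynomial.eval_finset_sum]
      apply Finset.sum_congr rfl
      intro q _
      simp [div_eq_mul_inv, mul_comm]
    have h2 : Polynomial.aeval (Ac⁻¹ * Bc) P = G 0 := by
      rw [hG0, hP, map_sum]
      apply Finset.sum_congr rfl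
      intro q _
      rw [map_mul, map_pow, map_mul, map_add, Polynomial.aeval_C, Polynomial.aeval_C,
        map_one, Polynomial.aeval_X, ← Algebra.smul_def, ← Algebra.smul_def, smul_pow]
    have := spectrum.subset_polynomial_aeval (Ac⁻¹ * Bc) P ⟨μ, hμ, h1⟩
    rwa [h2] at this
  -- Step E : contradiction via determinant bound
  have hdet0 : ((z • (1 : Matrix (Fin d) (Fin d) ℂ) - G 0).det) = 0 :=
    (my_mem_spectrum_iff_det _ _).mp hspec
  have hcont : Continuous (fun M : Matrix (Fin d) (Fin d) ℂ =>
      ‖(z • (1 : Matrix (Fin d) (Fin d) ℂ) - M).det‖) :=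
    continuous_norm.comp ((continuous_const.sub continuous_id).matrix_det)
  have htd : Filter.Tendsto (fun k : ℝ =>
      ‖(z • (1 : Matrix (Fin d) (Fin d) ℂ) - G k⁻¹).det‖)
      Filter.atTop (nhds 0) := by
    have h := (hcont.continuousAt (x := G 0)).tendsto.comp htend
    simpa [hdet0, Function.comp_def] using h
  have hev : ∀ᶠ k in Filter.atTop, (‖z‖ - 1) ^ d ≤
      ‖(z • (1 : Matrix (Fin d) (Fin d) ℂ) - G k⁻¹).det‖ := by
    filter_upwards [Filter.eventually_gt_atTop 0] with k hk
    rw [← hGM k hk]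
    exact my_det_lower_bound _ z (hstab k hk) hgt
  have hle : (‖z‖ - 1) ^ d ≤ 0 := ge_of_tendsto htd hev
  have hpos' : 0 < (‖z‖ - 1) ^ d := pow_pos (by linarith) d
  linarith
end
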